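/- Let C = 1/(q+1), Δ₂ = C² − 4h/(q+1), suppose Δ₂ > 0, let x₈ = (C + √Δ₂)/2, assume m < x₈, and set s₂ = (2x₈ + q·x₈ − 1)/(m − x₈). Let J be the Jacobian matrix of F at E₈ = (x₈, x₈), with trace s·(m − x₈) + (1 − 2x₈ − q·x₈) and determinant s·(m − x₈)·(1 − 2x₈ − 2q·x₈) > 0. Then: (i) if s > s₂, the trace of J is strictly negative; (ii) if s < s₂, the trace of J is strictly positive; (iii) if s = s₂, the trace of J is zero and the eigenvalues of J are the purely imaginary pair ±i·√(det J). -/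

import Mathlib

/-- The predator–prey vector field
    `F(x,y) = (x(1-x) - q x y - h, s y (1 - y/x)(y - m))`. -/
noncomputable def F (q s h m : ℝ) (p : ℝ × ℝ) : ℝ × ℝ :=
  (p.1 * (1 - p.1) - q * p.1 * p.2 - h, s * p.2 * (1 - p.2 / p.1) * (p.2 - m))

/-- The continuous linear map `ℝ² → ℝ²` with matrix `[[a, b], [c, d]]`. -/
noncomputable def clm (a b c d : ℝ) : (ℝ × ℝ) →L[ℝ] (ℝ × ℝ) :=
  (a • ContinuousLinearMap.fst ℝ ℝ ℝ + b • ContinuousLinearMap.snd ℝ ℝ ℝ).prod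
    (c • ContinuousLinearMap.fst ℝ ℝ ℝ + d • ContinuousLinearMap.snd ℝ ℝ ℝ)

lemma aux_fderiv1 (q h a b : ℝ) (x y : ℝ) (ha : a = 1 - 2*x - q*x) (hb : b = -q*x)
    (hxy : y = x) :
    HasFDerivAt (fun p : ℝ × ℝ => p.1 * (1 - p.1) - q * p.1 * p.2 - h)
      (a • ContinuousLinearMap.fst ℝ ℝ ℝ + b • ContinuousLinearMap.snd ℝ ℝ ℝ)
      ((x, y) : ℝ × ℝ) := by
  have hfst : HasFDerivAt (fun p : ℝ × ℝ => p.1) (ContinuousLinearMap.fst ℝ ℝ ℝ) (x, y) :=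
    hasFDerivAt_fst
  have hsnd : HasFDerivAt (fun p : ℝ × ℝ => p.2) (ContinuousLinearMap.snd ℝ ℝ ℝ) (x, y) :=
    hasFDerivAt_snd
  have H := ((hfst.mul ((hasFDerivAt_const (1:ℝ) _).sub hfst)).sub
    (((hasFDerivAt_const q _).mul hfst).mul hsnd)).sub (hasFDerivAt_const h _)
  refine H.congr_fderiv ?_
  apply ContinuousLinearMap.ext
  rintro ⟨u, v⟩
  simp [ha, hb, hxy]
  ring

lemma aux_fderiv2 (s m c d : ℝ) (x : ℝ) (hx : x ≠ 0) (hc : c = s*(x - m)) (hd : d = s*(m - x)) :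
    HasFDerivAt (fun p : ℝ × ℝ => s * p.2 * (1 - p.2 / p.1) * (p.2 - m))
      (c • ContinuousLinearMap.fst ℝ ℝ ℝ + d • ContinuousLinearMap.snd ℝ ℝ ℝ)
      ((x, x) : ℝ × ℝ) := by
  have hfst : HasFDerivAt (fun p : ℝ × ℝ => p.1) (ContinuousLinearMap.fst ℝ ℝ ℝ) (x, x) :=
    hasFDerivAt_fst
  have hsnd : HasFDerivAt (fun p : ℝ × ℝ => p.2) (ContinuousLinearMap.snd ℝ ℝ ℝ) (x, x) :=
    hasFDerivAt_snd
  have hinv : HasFDerivAt (fun p : ℝ × ℝ => (p.1)⁻¹)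
      ((ContinuousLinearMap.smulRight (1 : ℝ →L[ℝ] ℝ) (-(x^2)⁻¹)).comp
        (ContinuousLinearMap.fst ℝ ℝ ℝ)) (x, x) :=
    (hasFDerivAt_inv hx).comp _ hfst
  have H := ((((hasFDerivAt_const s _).mul hsnd).mul
      ((hasFDerivAt_const (1:ℝ) _).sub (hsnd.mul hinv))).mul
      (hsnd.sub (hasFDerivAt_const m _)))
  have heq : (fun p : ℝ × ℝ => s * p.2 * (1 - p.2 / p.1) * (p.2 - m))
      = (fun p : ℝ × ℝ => s * p.2 * (1 - p.2 * (p.1)⁻¹) * (p.2 - m)) := by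
    funext p; rw [div_eq_mul_inv]
  rw [heq]
  refine H.congr_fderiv ?_
  apply ContinuousLinearMap.ext
  rintro ⟨u, v⟩
  simp [hc, hd]
  field_simp
  ring

lemma aux_spec (a b c d : ℝ) (htr : d = -a) (hdet : 0 < a*d - b*c) :
    spectrum ℂ ((!![a,b;c,d] : Matrix (Fin 2) (Fin 2) ℝ).map Complex.ofReal) =
      {Complex.I * (Real.sqrt ((!![a,b;c,d] : Matrix (Fin 2) (Fin 2) ℝ).det) : ℂ),
       -(Complex.I * (Real.sqrt ((!![a,b;c,d] : Matrix (Fin 2) (Fin 2) ℝ).det) : ℂ))} := by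
  have hdet2 : (!![a,b;c,d] : Matrix (Fin 2) (Fin 2) ℝ).det = a*d - b*c := by
    simp [Matrix.det_fin_two]
  have hsq : ((Real.sqrt (a*d-b*c) : ℝ) : ℂ)^2 = (a*d - b*c : ℝ) := by
    rw [← Complex.ofReal_pow, Real.sq_sqrt hdet.le]
  ext z
  rw [spectrum.mem_iff, Matrix.isUnit_iff_isUnit_det, isUnit_iff_ne_zero, not_not]
  have key : ((algebraMap ℂ (Matrix (Fin 2) (Fin 2) ℂ)) z
        - (!![a,b;c,d] : Matrix (Fin 2) (Fin 2) ℝ).map Complex.ofReal).det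
      = (z - Complex.I * (Real.sqrt (a*d-b*c) : ℂ)) * (z + Complex.I * (Real.sqrt (a*d-b*c) : ℂ)) := by
    have h1 : ((algebraMap ℂ (Matrix (Fin 2) (Fin 2) ℂ)) z
          - (!![a,b;c,d] : Matrix (Fin 2) (Fin 2) ℝ).map Complex.ofReal)
        = !![z - a, -b; -c, z - d] := by
      ext i j
      fin_cases i <;> fin_cases j <;>
        simp [Matrix.algebraMap_eq_diagonal, Matrix.diagonal, Matrix.map_apply]
    rw [h1, Matrix.det_fin_two_of]
    have h2 : (z - a) * (z - d) - (-b:ℂ) * (-c) = z^2 + ((a*d - b*c : ℝ) : ℂ) := by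
      push_cast [htr]; ring
    rw [h2, ← hsq]
    ring_nf
    rw [Complex.I_sq]
    ring
  rw [key, hdet2]
  simp only [Set.mem_insert_iff, Set.mem_singleton_iff]
  constructor
  · intro hz
    rcases mul_eq_zero.mp hz with h | h
    · left; linear_combination h
    · right; linear_combination h
  · rintro (rfl | rfl) <;> ring

theorem stmt16 (q s h m x8 s2 : ℝ) (hq : 0 < q) (hs : 0 < s) (hh : 0 < h)
    (hm0 : 0 < m) (hm1 : m < 1)
    (hΔ : 0 < (1/(q+1))^2 - 4*h/(q+1))
    (hx8 : x8 = (1/(q+1) + Real.sqrt ((1/(q+1))^2 - 4*h/(q+1)))/2)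
    (hm : m < x8) (hs2 : s2 = (2*x8 + q*x8 - 1)/(m - x8)) :
    HasFDerivAt (F q s h m)
      (clm (1 - 2*x8 - q*x8) (-q*x8) (s*(x8 - m)) (s*(m - x8))) ((x8, x8) : ℝ × ℝ) ∧
    (!![1 - 2*x8 - q*x8, -q*x8; s*(x8 - m), s*(m - x8)] : Matrix (Fin 2) (Fin 2) ℝ).trace
      = s*(m - x8) + (1 - 2*x8 - q*x8) ∧
    (!![1 - 2*x8 - q*x8, -q*x8; s*(x8 - m), s*(m - x8)] : Matrix (Fin 2) (Fin 2) ℝ).det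
      = s*(m - x8)*(1 - 2*x8 - 2*q*x8) ∧
    0 < (!![1 - 2*x8 - q*x8, -q*x8; s*(x8 - m), s*(m - x8)] :
      Matrix (Fin 2) (Fin 2) ℝ).det ∧
    (s2 < s →
      (!![1 - 2*x8 - q*x8, -q*x8; s*(x8 - m), s*(m - x8)] :
        Matrix (Fin 2) (Fin 2) ℝ).trace < 0) ∧
    (s < s2 →
      0 < (!![1 - 2*x8 - q*x8, -q*x8; s*(x8 - m), s*(m - x8)] :
        Matrix (Fin 2) (Fin 2) ℝ).trace) ∧
    (s = s2 →
      (!![1 - 2*x8 - q*x8, -q*x8; s*(x8 - m), s*(m - x8)] :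
        Matrix (Fin 2) (Fin 2) ℝ).trace = 0 ∧
      spectrum ℂ ((!![1 - 2*x8 - q*x8, -q*x8; s*(x8 - m), s*(m - x8)] :
          Matrix (Fin 2) (Fin 2) ℝ).map Complex.ofReal) =
        {Complex.I * (Real.sqrt ((!![1 - 2*x8 - q*x8, -q*x8; s*(x8 - m), s*(m - x8)] :
            Matrix (Fin 2) (Fin 2) ℝ).det) : ℂ),
         -(Complex.I * (Real.sqrt ((!![1 - 2*x8 - q*x8, -q*x8; s*(x8 - m), s*(m - x8)] :
            Matrix (Fin 2) (Fin 2) ℝ).det) : ℂ))}) := by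
  have hq1 : (0:ℝ) < q + 1 := by linarith
  have hsqrt : 0 < Real.sqrt ((1/(q+1))^2 - 4*h/(q+1)) := Real.sqrt_pos.mpr hΔ
  have hCq : (1/(q+1)) * (q+1) = 1 := by field_simp
  have hx8pos : 0 < x8 := by
    rw [hx8]; positivity
  have hx8ne : x8 ≠ 0 := ne_of_gt hx8pos
  have hkey : 1 - 2*x8 - 2*q*x8 < 0 := by
    rw [hx8]; nlinarith [hsqrt, hCq, hq1]
  have hmx : m - x8 < 0 := by linarith
  have hmxne : m - x8 ≠ 0 := ne_of_lt hmx
  have htr : (!![1 - 2*x8 - q*x8, -q*x8; s*(x8 - m), s*(m - x8)] :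
      Matrix (Fin 2) (Fin 2) ℝ).trace = s*(m - x8) + (1 - 2*x8 - q*x8) := by
    simp [Matrix.trace_fin_two]; ring
  have hdetE : (!![1 - 2*x8 - q*x8, -q*x8; s*(x8 - m), s*(m - x8)] :
      Matrix (Fin 2) (Fin 2) ℝ).det = s*(m - x8)*(1 - 2*x8 - 2*q*x8) := by
    simp [Matrix.det_fin_two]; ring
  have hdetpos : 0 < s*(m - x8)*(1 - 2*x8 - 2*q*x8) := by
    have h1 : 0 < s*((x8 - m)*(2*x8 + 2*q*x8 - 1)) :=
      mul_pos hs (mul_pos (by linarith) (by linarith))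
    nlinarith [h1]
  have hs2m : (m - x8) * s2 = 2*x8 + q*x8 - 1 := by
    rw [hs2]; field_simp
  have htrfac : s*(m - x8) + (1 - 2*x8 - q*x8) = (m - x8)*(s - s2) := by
    have : (m - x8)*(s - s2) = s*(m - x8) - (m - x8)*s2 := by ring
    rw [this, hs2m]; ring
  refine ⟨?_, htr, hdetE, by rw [hdetE]; exact hdetpos, ?_, ?_, ?_⟩
  · exact (aux_fderiv1 q h _ _ x8 x8 rfl rfl rfl).prodMk
      (aux_fderiv2 s m _ _ x8 hx8ne rfl rfl)
  · intro hlt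
    rw [htr, htrfac]
    exact mul_neg_of_neg_of_pos hmx (by linarith)
  · intro hlt
    rw [htr, htrfac]
    exact mul_pos_of_neg_of_neg hmx (by linarith)
  · intro heq
    have htr0 : (!![1 - 2*x8 - q*x8, -q*x8; s*(x8 - m), s*(m - x8)] :
        Matrix (Fin 2) (Fin 2) ℝ).trace = 0 := by
      rw [htr, htrfac, heq]; ring
    refine ⟨htr0, ?_⟩
    apply aux_spec
    · rw [htr] at htr0; linarith
    · have := hdetpos; nlinarith [hdetpos]
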